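/- For all partitions λ, μ, ν and every natural number r, one has c_{λ, μ+(1^r)}^{ν+(1^r)} ≥ c_{λμ}^{ν}, where ρ+(1^r) denotes adding 1 to each of the first r parts of ρ (allowing trailing zero parts). -/
import Mathlib


open scoped Classical

/-- The cells of the skew shape `nu / lam`. -/
def skewCells (lam nu : YoungDiagram) : Finset (ℕ × ℕ) := nu.cells \ lam.cells

/-- `d` is read before (or at) `c` in the reverse reading word: rows are read from
top to bottom, and each row from right to left. -/
def readsBefore (d c : ℕ × ℕ) : Prop := d.1 < c.1 ∨ (d.1 = c.1 ∧ c.2 ≤ d.2)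

/-- `T` is a Littlewood–Richardson skew tableau of shape `nu / lam` and content `mu`:
entries are positive exactly on the cells of `nu / lam`, rows weakly increase,
columns strictly increase, the number of entries equal to `k + 1` is the `k`-th part
of `mu`, and every prefix of the reverse reading word contains at least as many
entries `k + 1` as entries `k + 2` (the lattice word condition). -/
def IsLRFilling (lam mu nu : YoungDiagram) (T : ℕ × ℕ → ℕ) : Prop :=
  (∀ c : ℕ × ℕ, c ∈ skewCells lam nu ↔ T c ≠ 0) ∧
  (∀ i j : ℕ, (i, j) ∈ skewCells lam nu → (i, j + 1) ∈ skewCells lam nu →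
      T (i, j) ≤ T (i, j + 1)) ∧
  (∀ i j : ℕ, (i, j) ∈ skewCells lam nu → (i + 1, j) ∈ skewCells lam nu →
      T (i, j) < T (i + 1, j)) ∧
  (∀ k : ℕ, ((skewCells lam nu).filter fun c => T c = k + 1).card = mu.rowLen k) ∧
  (∀ c ∈ skewCells lam nu, ∀ k : ℕ,
      ((skewCells lam nu).filter fun d => readsBefore d c ∧ T d = k + 2).card ≤
      ((skewCells lam nu).filter fun d => readsBefore d c ∧ T d = k + 1).card)

/-- The Littlewood–Richardson coefficient `c_{lam,mu}^{nu}`, defined by the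
Littlewood–Richardson rule as the number of Littlewood–Richardson skew tableaux of
shape `nu / lam` and content `mu`. -/
noncomputable def lrCoeff (lam mu nu : YoungDiagram) : ℕ :=
  if lam ≤ nu then Nat.card { T : ℕ × ℕ → ℕ // IsLRFilling lam mu nu T } else 0

lemma mem_skewCells {lam nu : YoungDiagram} {c : ℕ × ℕ} :
    c ∈ skewCells lam nu ↔ lam.rowLen c.1 ≤ c.2 ∧ c.2 < nu.rowLen c.1 := by
  cases c with
  | mk i j =>
    simp [skewCells, YoungDiagram.mem_cells, YoungDiagram.mem_iff_lt_rowLen, not_lt, and_comm]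

lemma readsBefore_refl (c : ℕ × ℕ) : readsBefore c c := Or.inr ⟨rfl, le_refl _⟩

lemma readsBefore_trans {a b c : ℕ × ℕ} (h1 : readsBefore a b) (h2 : readsBefore b c) :
    readsBefore a c := by
  rcases h1 with h | ⟨h, h'⟩ <;> rcases h2 with g | ⟨g, g'⟩
  · exact Or.inl (h.trans g)
  · exact Or.inl (g ▸ h)
  · exact Or.inl (h ▸ g)
  · exact Or.inr ⟨h.trans g, le_trans g' h'⟩

lemma readsBefore_iff_key {d c : ℕ × ℕ} :
    readsBefore d c ↔
      (toLex (d.1, OrderDual.toDual d.2) : Lex (ℕ × ℕᵒᵈ)) ≤ toLex (c.1, OrderDual.toDual c.2) := by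
  rw [Prod.Lex.le_iff]; rfl

/-- rows of an LR filling weakly increase across a whole row of the skew shape -/
lemma row_mono {lam mu nu : YoungDiagram} {T : ℕ × ℕ → ℕ} (hT : IsLRFilling lam mu nu T)
    {i j j' : ℕ} (hj : j ≤ j') (h1 : (i, j) ∈ skewCells lam nu)
    (h2 : (i, j') ∈ skewCells lam nu) : T (i, j) ≤ T (i, j') := by
  induction j' , hj using Nat.le_induction with
  | base => exact le_refl _
  | succ n hn ih =>
    have hmid : (i, n) ∈ skewCells lam nu := by
      rw [mem_skewCells] at h1 h2 ⊢
      exact ⟨le_trans h1.1 hn, lt_trans (Nat.lt_succ_self n) h2.2⟩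
    exact le_trans (ih hmid) (hT.2.1 i n hmid h2)

/-- entries of an LR filling are bounded by row index + 1 -/
lemma entry_le {lam mu nu : YoungDiagram} {T : ℕ × ℕ → ℕ} (hT : IsLRFilling lam mu nu T) :
    ∀ i j, (i, j) ∈ skewCells lam nu → T (i, j) ≤ i + 1 := by
  intro i
  induction i using Nat.strong_induction_on with
  | _ i ih =>
    intro j hc
    rcases Nat.lt_or_ge (T (i, j)) 2 with h | h
    · omega
    · obtain ⟨k, hk⟩ : ∃ k, T (i, j) = k + 2 := ⟨T (i, j) - 2, by omega⟩
      -- the (k+2)-prefix filter at c = (i,j) is nonempty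
      have hmem : (i, j) ∈ (skewCells lam nu).filter
          fun d => readsBefore d (i, j) ∧ T d = k + 2 :=
        Finset.mem_filter.2 ⟨hc, readsBefore_refl _, hk⟩
      have hcard : 1 ≤ ((skewCells lam nu).filter
          fun d => readsBefore d (i, j) ∧ T d = k + 1).card :=
        le_trans (Finset.card_pos.2 ⟨_, hmem⟩) (hT.2.2.2.2 (i, j) hc k)
      obtain ⟨d, hd⟩ := Finset.card_pos.1 hcard
      rw [Finset.mem_filter] at hd
      obtain ⟨hdmem, hdb, hdv⟩ := hd
      obtain ⟨d1, d2⟩ := d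
      have hdrow : d1 < i := by
        rcases hdb with h' | ⟨h', h''⟩
        · exact h'
        · exfalso
          simp only at h' h'' ⊢
          subst h'
          have : T (d1, j) ≤ T (d1, d2) := row_mono hT h'' hc hdmem
          omega
      have := ih d1 hdrow d2 hdmem
      omega

/-- the lattice condition holds with respect to any point, not just cells of the shape -/
lemma lattice_general {lam mu nu : YoungDiagram} {T : ℕ × ℕ → ℕ} (hT : IsLRFilling lam mu nu T)
    (c : ℕ × ℕ) (k : ℕ) :
    ((skewCells lam nu).filter fun d => readsBefore d c ∧ T d = k + 2).card ≤
    ((skewCells lam nu).filter fun d => readsBefore d c ∧ T d = k + 1).card := by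
  set S := (skewCells lam nu).filter (fun d => readsBefore d c) with hS
  rcases Finset.eq_empty_or_nonempty S with hE | hNe
  · have h2 : ((skewCells lam nu).filter fun d => readsBefore d c ∧ T d = k + 2) ⊆ S := by
      intro d hd
      rw [Finset.mem_filter] at hd ⊢
      exact ⟨hd.1, hd.2.1⟩
    rw [hE, Finset.subset_empty] at h2
    simp [h2]
  · obtain ⟨d0, hd0, hmax⟩ := S.exists_max_image
      (fun d => (toLex (d.1, OrderDual.toDual d.2) : Lex (ℕ × ℕᵒᵈ))) hNe
    rw [hS, Finset.mem_filter] at hd0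
    have key : ∀ v : ℕ, (skewCells lam nu).filter (fun d => readsBefore d c ∧ T d = v) =
        (skewCells lam nu).filter (fun d => readsBefore d0 c ∧ readsBefore d d0 ∧ T d = v) := by
      intro v
      apply Finset.filter_congr
      intro d hd
      constructor
      · rintro ⟨hb, hv⟩
        refine ⟨hd0.2, ?_, hv⟩
        have := hmax d (by rw [hS, Finset.mem_filter]; exact ⟨hd, hb⟩)
        exact readsBefore_iff_key.2 this
      · rintro ⟨_, hb, hv⟩
        exact ⟨readsBefore_trans hb hd0.2, hv⟩
    rw [key (k+2), key (k+1)]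
    have := hT.2.2.2.2 d0 hd0.1 k
    by_cases hb : readsBefore d0 c
    · simpa [hb] using this
    · simp [hb]

lemma finite_filling (lam mu nu : YoungDiagram) :
    Finite {T : ℕ × ℕ → ℕ // IsLRFilling lam mu nu T} := by
  have : ∀ (T : {T : ℕ × ℕ → ℕ // IsLRFilling lam mu nu T}) (c : skewCells lam nu),
      T.1 c.1 < nu.colLen 0 + 1 := by
    rintro ⟨T, hT⟩ ⟨⟨i, j⟩, hc⟩
    have h1 : T (i, j) ≤ i + 1 := entry_le hT i j hc
    have h2 : i < nu.colLen j := by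
      rw [← YoungDiagram.mem_iff_lt_colLen]
      rw [mem_skewCells] at hc
      exact YoungDiagram.mem_iff_lt_rowLen.2 hc.2
    have h3 := nu.colLen_anti 0 j (Nat.zero_le j)
    simp only
    omega
  apply Finite.of_injective
    (fun T : {T : ℕ × ℕ → ℕ // IsLRFilling lam mu nu T} =>
      (fun c : skewCells lam nu => (⟨T.1 c.1, this T c⟩ : Fin (nu.colLen 0 + 1))))
  rintro ⟨T1, h1⟩ ⟨T2, h2⟩ h
  ext c
  by_cases hc : c ∈ skewCells lam nu
  · show T1 c = T2 c
    exact congrArg Fin.val (congrFun h ⟨c, hc⟩)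
  · have e1 : T1 c = 0 := by
      by_contra he; exact hc ((h1.1 c).2 he)
    have e2 : T2 c = 0 := by
      by_contra he; exact hc ((h2.1 c).2 he)
    show T1 c = T2 c
    rw [e1, e2]

def newCellsF (nu : YoungDiagram) (r : ℕ) : Finset (ℕ × ℕ) :=
  (Finset.range r).image fun i => (i, nu.rowLen i)

lemma mem_newCellsF {nu : YoungDiagram} {r : ℕ} {c : ℕ × ℕ} :
    c ∈ newCellsF nu r ↔ c.1 < r ∧ c.2 = nu.rowLen c.1 := by
  cases c with
  | mk i j =>
    simp only [newCellsF, Finset.mem_image, Finset.mem_range]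
    constructor
    · rintro ⟨a, ha, he⟩
      obtain ⟨rfl, rfl⟩ := Prod.mk.injEq .. ▸ he
      exact ⟨ha, rfl⟩
    · rintro ⟨ha, rfl⟩
      exact ⟨i, ha, rfl⟩

lemma rowLen_le_of_le {lam nu : YoungDiagram} (h : lam ≤ nu) (i : ℕ) :
    lam.rowLen i ≤ nu.rowLen i := by
  rcases Nat.eq_zero_or_pos (lam.rowLen i) with h0 | h0
  · omega
  · have : (i, lam.rowLen i - 1) ∈ lam := YoungDiagram.mem_iff_lt_rowLen.2 (by omega)
    have := YoungDiagram.mem_iff_lt_rowLen.1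
      (YoungDiagram.cells_subset_iff.2 h this)
    omega

lemma isLR_extend {lam mu nu mu' nu' : YoungDiagram} {r : ℕ} {T : ℕ × ℕ → ℕ}
    (hle : lam ≤ nu)
    (hmu : ∀ i : ℕ, mu'.rowLen i = mu.rowLen i + (if i < r then 1 else 0))
    (hnu : ∀ i : ℕ, nu'.rowLen i = nu.rowLen i + (if i < r then 1 else 0))
    (hT : IsLRFilling lam mu nu T) :
    IsLRFilling lam mu' nu'
      (fun c => if c.1 < r ∧ c.2 = nu.rowLen c.1 then c.1 + 1 else T c) := by
  set T' : ℕ × ℕ → ℕ := fun c => if c.1 < r ∧ c.2 = nu.rowLen c.1 then c.1 + 1 else T c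
    with hT'def
  have hval : ∀ i j : ℕ, (i < r ∧ j = nu.rowLen i → T' (i, j) = i + 1) ∧
      (¬(i < r ∧ j = nu.rowLen i) → T' (i, j) = T (i, j)) := by
    intro i j
    constructor
    · intro h; rw [hT'def]; exact if_pos h
    · intro h; rw [hT'def]; exact if_neg h
  have hdec : skewCells lam nu' = skewCells lam nu ∪ newCellsF nu r := by
    ext c
    rw [Finset.mem_union, mem_skewCells, mem_skewCells, mem_newCellsF, hnu c.1]
    have := rowLen_le_of_le hle c.1
    split_ifs with h <;> omega
  have hdisj : Disjoint (skewCells lam nu) (newCellsF nu r) := by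
    rw [Finset.disjoint_left]
    intro c hc hcn
    rw [mem_skewCells] at hc
    rw [mem_newCellsF] at hcn
    omega
  have hold : ∀ c ∈ skewCells lam nu, T' c = T c := by
    rintro ⟨i, j⟩ hc
    rw [mem_skewCells] at hc
    simp only [Prod.fst, Prod.snd] at hc
    exact (hval i j).2 (by omega)
  have hinj : Function.Injective (fun i : ℕ => (i, nu.rowLen i)) := by
    intro a b h
    exact congrArg Prod.fst h
  have hmem : ∀ i j : ℕ, lam.rowLen i ≤ j → j < nu.rowLen i → (i, j) ∈ skewCells lam nu := by
    intro i j a b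
    rw [mem_skewCells]
    exact ⟨a, b⟩
  refine ⟨?_, ?_, ?_, ?_, ?_⟩
  -- (1) support
  · rintro ⟨i, j⟩
    constructor
    · intro hc
      rw [hdec, Finset.mem_union] at hc
      rcases hc with hc | hc
      · rw [hold (i, j) hc]
        exact (hT.1 (i, j)).1 hc
      · rw [mem_newCellsF] at hc
        rw [(hval i j).1 hc]
        omega
    · intro hc
      by_contra hmem0
      rw [hdec, Finset.mem_union] at hmem0
      push_neg at hmem0
      have h2 := hmem0.2
      rw [mem_newCellsF] at h2
      rw [(hval i j).2 h2] at hc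
      exact hmem0.1 ((hT.1 (i, j)).2 hc)
  -- (2) rows weakly increase
  · intro i j hj hj1
    rw [mem_skewCells, hnu] at hj hj1
    dsimp only at hj hj1
    split_ifs at hj hj1 with hir
    · -- i < r
      by_cases hn1 : j + 1 = nu.rowLen i
      · rw [(hval i (j + 1)).1 ⟨hir, hn1⟩, (hval i j).2 (by omega)]
        exact entry_le hT i j (hmem i j hj.1 (by omega))
      · rw [(hval i (j + 1)).2 (by omega),
          (hval i j).2 (by omega)]
        exact hT.2.1 i j (hmem i j hj.1 (by omega))
          (hmem i (j + 1) hj1.1 (by omega))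
    · rw [(hval i (j + 1)).2 (by omega),
        (hval i j).2 (by omega)]
      exact hT.2.1 i j (hmem i j hj.1 (by omega))
        (hmem i (j + 1) hj1.1 (by omega))
  -- (3) columns strictly increase
  · intro i j hj hj1
    rw [mem_skewCells, hnu] at hj hj1
    dsimp only at hj hj1
    have hant : nu.rowLen (i + 1) ≤ nu.rowLen i := nu.rowLen_anti i (i + 1) (by omega)
    split_ifs at hj hj1 with hir hir1 hir1
    · -- i < r, i+1 < r
      by_cases hn1 : j = nu.rowLen (i + 1)
      · rw [(hval (i + 1) j).1 ⟨hir1, hn1⟩]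
        by_cases hn0 : j = nu.rowLen i
        · rw [(hval i j).1 ⟨hir, hn0⟩]
          omega
        · rw [(hval i j).2 (by omega)]
          have := entry_le hT i j (hmem i j hj.1 (by omega))
          omega
      · have hj1' : j < nu.rowLen (i + 1) := by omega
        rw [(hval (i + 1) j).2 (by omega),
          (hval i j).2 (by omega)]
        exact hT.2.2.1 i j (hmem i j hj.1 (by omega))
          (hmem (i + 1) j hj1.1 (by omega))
    · -- i < r, ¬ i+1 < r : row i+1 has no new cell, j < nu.rowLen (i+1)
      have hj1' : j < nu.rowLen (i + 1) := hj1.2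
      rw [(hval (i + 1) j).2 (by omega),
        (hval i j).2 (by omega)]
      exact hT.2.2.1 i j (hmem i j hj.1 (by omega))
        (hmem (i + 1) j hj1.1 (by omega))
    · omega
    · have hj1' : j < nu.rowLen (i + 1) := hj1.2
      rw [(hval (i + 1) j).2 (by omega),
        (hval i j).2 (by omega)]
      exact hT.2.2.1 i j (hmem i j hj.1 (by omega))
        (hmem (i + 1) j hj1.1 (by omega))
  -- (4) content
  · intro k
    rw [hdec, Finset.filter_union,
      Finset.card_union_of_disjoint (Finset.disjoint_filter_filter hdisj)]
    have e1 : (skewCells lam nu).filter (fun c => T' c = k + 1) =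
        (skewCells lam nu).filter (fun c => T c = k + 1) := by
      apply Finset.filter_congr
      intro c hc
      rw [hold c hc]
    have e2 : ((newCellsF nu r).filter (fun c => T' c = k + 1)).card =
        (if k < r then 1 else 0) := by
      rw [newCellsF, Finset.filter_image]
      rw [Finset.card_image_of_injective _ hinj]
      have : (Finset.range r).filter (fun i => T' (i, nu.rowLen i) = k + 1) =
          (Finset.range r).filter (fun i => i = k) := by
        apply Finset.filter_congr
        intro i hi
        rw [Finset.mem_range] at hi
        rw [(hval i (nu.rowLen i)).1 ⟨hi, rfl⟩]
        omega
      rw [this, Finset.filter_eq']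
      split_ifs with h h' h'
      · exact Finset.card_singleton _
      · exact absurd (Finset.mem_range.1 h) h'
      · exact absurd (Finset.mem_range.2 h') h
      · exact Finset.card_empty
    rw [e1, e2, hT.2.2.2.1 k, hmu k]
  -- (5) lattice
  · intro c _ k
    have hcount : ∀ m : ℕ,
        ((newCellsF nu r).filter (fun d => readsBefore d c ∧ T' d = m + 1)).card =
        (if m < r ∧ readsBefore (m, nu.rowLen m) c then 1 else 0) := by
      intro m
      rw [newCellsF, Finset.filter_image, Finset.card_image_of_injective _ hinj]
      have : (Finset.range r).filter
            (fun i => readsBefore (i, nu.rowLen i) c ∧ T' (i, nu.rowLen i) = m + 1) =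
          (Finset.range r).filter (fun i => i = m ∧ readsBefore (m, nu.rowLen m) c) := by
        apply Finset.filter_congr
        intro i hi
        rw [Finset.mem_range] at hi
        rw [(hval i (nu.rowLen i)).1 ⟨hi, rfl⟩]
        constructor
        · rintro ⟨hb, he⟩
          have : i = m := by omega
          subst this
          exact ⟨rfl, hb⟩
        · rintro ⟨rfl, hb⟩
          exact ⟨hb, rfl⟩
      rw [this]
      by_cases hb : readsBefore (m, nu.rowLen m) c
      · simp only [hb, and_true]
        rw [Finset.filter_eq']
        split_ifs with h h' h'
        · exact Finset.card_singleton _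
        · exact absurd (Finset.mem_range.1 h) h'
        · exact absurd (Finset.mem_range.2 h') h
        · exact Finset.card_empty
      · simp [hb]
    have eold : ∀ m : ℕ, (skewCells lam nu).filter (fun d => readsBefore d c ∧ T' d = m) =
        (skewCells lam nu).filter (fun d => readsBefore d c ∧ T d = m) := by
      intro m
      apply Finset.filter_congr
      intro d hd
      rw [hold d hd]
    rw [hdec, Finset.filter_union, Finset.filter_union,
      Finset.card_union_of_disjoint (Finset.disjoint_filter_filter hdisj),
      Finset.card_union_of_disjoint (Finset.disjoint_filter_filter hdisj),
      eold (k + 2), eold (k + 1), hcount (k + 1), hcount k]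
    have hmain := lattice_general hT c k
    have hnewle : (if k + 1 < r ∧ readsBefore (k + 1, nu.rowLen (k + 1)) c then 1 else 0) ≤
        (if k < r ∧ readsBefore (k, nu.rowLen k) c then 1 else 0) := by
      split_ifs with h h' h'
      · exact le_refl 1
      · exfalso
        exact h' ⟨by omega, readsBefore_trans (Or.inl (Nat.lt_succ_self k)) h.2⟩
      · exact Nat.zero_le 1
      · exact le_refl 0
    exact Nat.add_le_add hmain hnewle

theorem lrCoeff_le' (lam mu nu mu' nu' : YoungDiagram) (r : ℕ)
    (hmu : ∀ i : ℕ, mu'.rowLen i = mu.rowLen i + (if i < r then 1 else 0))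
    (hnu : ∀ i : ℕ, nu'.rowLen i = nu.rowLen i + (if i < r then 1 else 0)) :
    (if lam ≤ nu then Nat.card { T : ℕ × ℕ → ℕ // IsLRFilling lam mu nu T } else 0) ≤
    (if lam ≤ nu' then Nat.card { T : ℕ × ℕ → ℕ // IsLRFilling lam mu' nu' T } else 0) := by
  by_cases hle : lam ≤ nu
  · have hnn : nu ≤ nu' := by
      rw [← YoungDiagram.cells_subset_iff]
      intro c hc
      rw [YoungDiagram.mem_cells, YoungDiagram.mem_iff_lt_rowLen] at hc ⊢
      rw [hnu c.1]
      split_ifs <;> omega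
    have hle' : lam ≤ nu' := le_trans hle hnn
    rw [if_pos hle, if_pos hle']
    haveI : Finite { T : ℕ × ℕ → ℕ // IsLRFilling lam mu' nu' T } := finite_filling _ _ _
    apply Nat.card_le_card_of_injective
      (fun T : { T : ℕ × ℕ → ℕ // IsLRFilling lam mu nu T } =>
        (⟨fun c => if c.1 < r ∧ c.2 = nu.rowLen c.1 then c.1 + 1 else T.1 c,
          isLR_extend hle hmu hnu T.2⟩ : { T : ℕ × ℕ → ℕ // IsLRFilling lam mu' nu' T }))
    rintro ⟨T1, h1⟩ ⟨T2, h2⟩ h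
    have hfun := congrArg Subtype.val h
    ext c
    show T1 c = T2 c
    have hc := congrFun hfun c
    by_cases hcn : c.1 < r ∧ c.2 = nu.rowLen c.1
    · have hns : c ∉ skewCells lam nu := by
        rw [mem_skewCells]
        omega
      have e1 : T1 c = 0 := by
        by_contra he; exact hns ((h1.1 c).2 he)
      have e2 : T2 c = 0 := by
        by_contra he; exact hns ((h2.1 c).2 he)
      rw [e1, e2]
    · simpa [if_neg hcn] using hc
  · rw [if_neg hle]
    exact Nat.zero_le _

/-- For all partitions `lam`, `mu`, `nu` and every natural number `r`,
`c_{lam, mu+(1^r)}^{nu+(1^r)} ≥ c_{lam,mu}^{nu}`, where `ρ + (1^r)` denotes the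
partition obtained from `ρ` by adding `1` to each of the first `r` parts (treating
absent parts as `0`). -/
theorem lrCoeff_le_lrCoeff_add_column (lam mu nu mu' nu' : YoungDiagram) (r : ℕ)
    (hmu : ∀ i : ℕ, mu'.rowLen i = mu.rowLen i + (if i < r then 1 else 0))
    (hnu : ∀ i : ℕ, nu'.rowLen i = nu.rowLen i + (if i < r then 1 else 0)) :
    lrCoeff lam mu nu ≤ lrCoeff lam mu' nu' := by
  exact lrCoeff_le' lam mu nu mu' nu' r hmu hnu
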